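/- arXiv:2006.00322 — 7 statements merged into one kernel-verified Lean document; each statement's English description precedes it below -/
import Mathlib

section
/- Consider a greedy assignment process where items of positive weight w_1, …, w_n are assigned one at a time, each to a knapsack currently having the minimum load-minus-capacity value among knapsacks i ∈ M with capacities c_i > 0. If the total weight satisfies ∑_{j=1}^n w_j ≤ ∑_{i∈M} c_i, then at every step the chosen knapsack has load strictly less than its capacity before the new item is added; consequently, after all assignments, no knapsack's load exceeds its capacity by more than max_j w_j. -/
/-- Greedy sequential assignment: items of positive weight are assigned one at a time,
each to a knapsack minimizing (current load − capacity). If the total weight is at most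
the total capacity, then at every step the chosen knapsack's load is strictly below its
capacity before the item is added, and after all assignments no knapsack's load exceeds
its capacity by more than the maximum item weight. -/
theorem greedy_assignment_bound {M : Type*} [Fintype M] [DecidableEq M] [Nonempty M] (n : ℕ)
    (c : M → ℝ) (hc : ∀ i, 0 < c i)
    (w : Fin n → ℝ) (hw : ∀ j, 0 < w j)
    (wmax : ℝ) (hwmax : IsGreatest (Set.range w) wmax)
    (htot : ∑ j, w j ≤ ∑ i, c i)
    (A : Fin n → M)
    (load : ℕ → M → ℝ)
    (hload : ∀ t i, load t i =
      ∑ j ∈ Finset.univ.filter (fun j : Fin n => (j : ℕ) < t ∧ A j = i), w j)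
    (hgreedy : ∀ t : Fin n, ∀ i, load t (A t) - c (A t) ≤ load t i - c i) :
    (∀ t : Fin n, load t (A t) < c (A t)) ∧
    (∀ i, load n i ≤ c i + wmax) := by
  have hsumload : ∀ t : ℕ, ∑ i, load t i =
      ∑ j ∈ Finset.univ.filter (fun j : Fin n => (j : ℕ) < t), w j := by
    intro t
    simp_rw [hload]
    rw [← Finset.sum_fiberwise (Finset.univ.filter (fun j : Fin n => (j : ℕ) < t)) A w]
    congr 1
    ext i
    rw [Finset.filter_filter]
  have key : ∀ t : Fin n, load t (A t) < c (A t) := by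
    intro t
    by_contra h
    push_neg at h
    have hlt : ∑ j ∈ Finset.univ.filter (fun j : Fin n => (j : ℕ) < (t : ℕ)), w j
        < ∑ j, w j := by
      apply Finset.sum_lt_sum_of_subset (Finset.filter_subset _ _) (Finset.mem_univ t)
      · simp
      · exact hw t
      · intro j _ _; exact (hw j).le
    have hneg : ∑ i, (load (t : ℕ) i - c i) < 0 := by
      rw [Finset.sum_sub_distrib, hsumload]
      linarith
    obtain ⟨i, -, hi⟩ := Finset.exists_lt_of_sum_lt
      (f := fun i => load (t : ℕ) i - c i) (g := fun _ => (0 : ℝ))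
      (by rw [Finset.sum_const_zero]; exact hneg)
    have := hgreedy t i
    linarith
  refine ⟨key, ?_⟩
  intro i
  obtain ⟨j0, hj0⟩ := hwmax.1
  by_cases hfib : (Finset.univ.filter (fun j : Fin n => A j = i)).Nonempty
  · set t := (Finset.univ.filter (fun j : Fin n => A j = i)).max' hfib with ht
    have htmem := Finset.max'_mem _ hfib
    have hAt : A t = i := (Finset.mem_filter.mp htmem).2
    have hsplit : Finset.univ.filter (fun j : Fin n => (j : ℕ) < n ∧ A j = i)
        = insert t (Finset.univ.filter (fun j : Fin n => (j : ℕ) < (t : ℕ) ∧ A j = i)) := by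
      ext j
      simp only [Finset.mem_filter, Finset.mem_univ, true_and, Finset.mem_insert]
      constructor
      · rintro ⟨-, hji⟩
        rcases eq_or_ne j t with rfl | hne
        · exact Or.inl rfl
        · refine Or.inr ⟨?_, hji⟩
          have hle : j ≤ t := Finset.le_max' _ j (by simpa using hji)
          exact lt_of_le_of_ne hle (by simpa [Fin.ext_iff] using hne)
      · rintro (rfl | ⟨-, hji⟩)
        · exact ⟨t.isLt, hAt⟩
        · exact ⟨j.isLt, hji⟩
    have hloadn : load n i = load (t : ℕ) i + w t := by
      rw [hload, hload, hsplit, Finset.sum_insert (by simp)]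
      ring
    have h1 : load (t : ℕ) i < c i := by
      have := key t
      rwa [hAt] at this
    have h2 : w t ≤ wmax := hwmax.2 ⟨t, rfl⟩
    linarith [hloadn, h1, h2]
  · rw [Finset.not_nonempty_iff_eq_empty, Finset.filter_eq_empty_iff] at hfib
    have hzero : load n i = 0 := by
      rw [hload]
      apply Finset.sum_eq_zero
      intro j hj
      exact absurd (Finset.mem_filter.mp hj).2.2 (hfib (Finset.mem_univ j))
    have : (0:ℝ) < wmax := hj0 ▸ hw j0
    linarith [hc i]
end

section
/- For any d > 0 and any feasible GMKP assignment (x, z) — i.e., x : M × N → {0,1} with ∑_{j∈N} w_j x_{i,j} ≤ c_i for all i ∈ M and ∑_{i∈M} x_{i,j} = z_l for all l and j ∈ G_l — the inequality ∑_{l∈K} ∑_{j∈G_l} f_d(w_j)·z_l ≤ ∑_{i∈M} f_d(c_i) holds, where f_d(y) = max{q ∈ ℤ : q < y/d}. -/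
/-- `fd d y` is the largest integer strictly less than `y / d`. -/
noncomputable def fd (d y : ℝ) : ℤ := ⌈y / d⌉ - 1

lemma fd_mono {d : ℝ} (hd : 0 < d) {a b : ℝ} (hab : a ≤ b) : fd d a ≤ fd d b := by
  unfold fd
  have : a / d ≤ b / d := div_le_div_of_nonneg_right hab hd.le
  exact sub_le_sub_right (Int.ceil_le_ceil this) 1

lemma fd_superadd {d : ℝ} (hd : 0 < d) (a b : ℝ) : fd d a + fd d b ≤ fd d (a + b) := by
  unfold fd
  have h1 : (⌈a / d⌉ : ℝ) < a / d + 1 := Int.ceil_lt_add_one _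
  have h2 : (⌈b / d⌉ : ℝ) < b / d + 1 := Int.ceil_lt_add_one _
  have h3 : (a + b) / d ≤ (⌈(a + b) / d⌉ : ℝ) := Int.le_ceil _
  have habd : a / d + b / d = (a + b) / d := by ring
  have : (⌈a / d⌉ : ℝ) + ⌈b / d⌉ - 2 < (⌈(a + b) / d⌉ : ℝ) := by
    nlinarith
  have : (⌈a / d⌉ : ℤ) + ⌈b / d⌉ - 2 < ⌈(a + b) / d⌉ := by exact_mod_cast this
  omega

lemma fd_nonneg {d y : ℝ} (hd : 0 < d) (hy : 0 < y) : 0 ≤ fd d y := by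
  unfold fd
  have : 0 < ⌈y / d⌉ := Int.ceil_pos.2 (div_pos hy hd)
  omega

lemma fd_sum_le {N : Type*} {d : ℝ} (hd : 0 < d) (w : N → ℝ) (S : Finset N)
    (hS : S.Nonempty) : ∑ j ∈ S, fd d (w j) ≤ fd d (∑ j ∈ S, w j) := by
  induction hS using Finset.Nonempty.cons_induction with
  | singleton a => simp
  | cons a s ha hs ih =>
    rw [Finset.sum_cons, Finset.sum_cons]
    calc fd d (w a) + ∑ j ∈ s, fd d (w j) ≤ fd d (w a) + fd d (∑ j ∈ s, w j) := by
          exact add_le_add le_rfl ih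
      _ ≤ fd d (w a + ∑ j ∈ s, w j) := fd_superadd hd _ _

/-- The counting constraint obtained by applying `f_d` to weights and capacities is a
valid inequality for every capacity-feasible GMKP assignment. -/
theorem fd_cut_valid {M N : Type*} [Fintype M] [Fintype N] (k : ℕ)
    (c : M → ℝ) (w : N → ℝ) (hc : ∀ i, 0 < c i) (hw : ∀ j, 0 < w j)
    (G : Fin k → Finset N) (hpart : ∀ j : N, ∃! l, j ∈ G l)
    (d : ℝ) (hd : 0 < d)
    (x : M → N → ℝ) (z : Fin k → ℝ)
    (hx01 : ∀ i j, x i j = 0 ∨ x i j = 1)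
    (hz01 : ∀ l, z l = 0 ∨ z l = 1)
    (hcap : ∀ i, ∑ j, w j * x i j ≤ c i)
    (hgroup : ∀ l, ∀ j ∈ G l, ∑ i, x i j = z l) :
    ∑ l, ∑ j ∈ G l, (fd d (w j) : ℝ) * z l ≤ ∑ i, (fd d (c i) : ℝ) := by
  classical
  -- partition sum lemma
  have hdisj : ((Finset.univ : Finset (Fin k)) : Set (Fin k)).PairwiseDisjoint G := by
    intro l1 _ l2 _ hne
    refine Finset.disjoint_left.2 fun j hj1 hj2 => hne ?_
    obtain ⟨l, _, huniq⟩ := hpart j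
    rw [huniq l1 hj1, huniq l2 hj2]
  have hcover : (Finset.univ : Finset (Fin k)).biUnion G = Finset.univ := by
    refine Finset.eq_univ_of_forall fun j => ?_
    obtain ⟨l, hl, _⟩ := hpart j
    exact Finset.mem_biUnion.2 ⟨l, Finset.mem_univ _, hl⟩
  have hpartsum : ∀ g : N → ℝ, ∑ l, ∑ j ∈ G l, g j = ∑ j, g j := by
    intro g
    rw [← Finset.sum_biUnion hdisj, hcover]
  -- rewrite LHS
  have hLHS : ∑ l, ∑ j ∈ G l, (fd d (w j) : ℝ) * z l
      = ∑ i, ∑ j, (fd d (w j) : ℝ) * x i j := by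
    have h1 : ∀ l, ∑ j ∈ G l, (fd d (w j) : ℝ) * z l
        = ∑ j ∈ G l, ∑ i, (fd d (w j) : ℝ) * x i j := by
      intro l
      refine Finset.sum_congr rfl fun j hj => ?_
      rw [← hgroup l j hj, Finset.mul_sum]
    rw [Finset.sum_congr rfl fun l _ => h1 l,
      hpartsum (fun j => ∑ i, (fd d (w j) : ℝ) * x i j), Finset.sum_comm]
  rw [hLHS]
  refine Finset.sum_le_sum fun i _ => ?_
  -- per-knapsack bound
  set S := Finset.univ.filter (fun j => x i j = 1) with hSdef
  have hsum_eq : ∀ g : N → ℝ, ∑ j, g j * x i j = ∑ j ∈ S, g j := by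
    intro g
    rw [Finset.sum_filter]
    refine Finset.sum_congr rfl fun j _ => ?_
    rcases hx01 i j with h | h <;> simp [h]
  have hwS : ∑ j ∈ S, w j ≤ c i := by rw [← hsum_eq w]; exact hcap i
  rw [hsum_eq (fun j => (fd d (w j) : ℝ))]
  rcases S.eq_empty_or_nonempty with h | h
  · simp only [h, Finset.sum_empty]
    exact_mod_cast fd_nonneg hd (hc i)
  · have h1 : ∑ j ∈ S, fd d (w j) ≤ fd d (∑ j ∈ S, w j) := fd_sum_le hd w S h
    have h2 : fd d (∑ j ∈ S, w j) ≤ fd d (c i) := fd_mono hd hwS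
    have := h1.trans h2
    calc ∑ j ∈ S, (fd d (w j) : ℝ) = ((∑ j ∈ S, fd d (w j) : ℤ) : ℝ) := by push_cast; ring
      _ ≤ (fd d (c i) : ℝ) := by exact_mod_cast this
end

section
/- Let a ≥ 2 be an integer and suppose a knapsack of capacity c = a^r (r ∈ ℕ) is loaded greedily with items whose weights are powers of a, in non-increasing order of weight, where each item is added only if it fits in the remaining capacity exactly according to the greedy rule. Then at every step, the remaining free capacity is a nonnegative integer multiple of the weight of the next item to be considered whenever that weight is at most the capacity; consequently, an item of weight a^q ≤ a^r whose assignment would exceed the capacity cannot exist—either it fits exactly within the free capacity or the knapsack is already full. -/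
/-- Greedy loading of a knapsack of capacity `a^r` with powers-of-`a` weights in
non-increasing order: at every step the remaining free capacity is divisible by the
weight `a^(q t)` of the next item, hence if positive it is at least `a^(q t)`; an item
whose assignment would exceed capacity cannot exist. -/
theorem powers_residual_multiple (a : ℤ) (ha : 2 ≤ a) (r s : ℕ) (q : Fin s → ℕ)
    (hmono : ∀ t u : Fin s, t ≤ u → q u ≤ q t) (hle : ∀ t, q t ≤ r) :
    ∀ t : Fin s,
      (a ^ (q t) ∣ (a ^ r - ∑ u ∈ Finset.univ.filter (· < t), a ^ (q u))) ∧
      (0 < a ^ r - ∑ u ∈ Finset.univ.filter (· < t), a ^ (q u) →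
        a ^ (q t) ≤ a ^ r - ∑ u ∈ Finset.univ.filter (· < t), a ^ (q u)) := by
  intro t
  have hdvd : a ^ (q t) ∣ (a ^ r - ∑ u ∈ Finset.univ.filter (· < t), a ^ (q u)) := by
    apply dvd_sub
    · exact pow_dvd_pow a (hle t)
    · apply Finset.dvd_sum
      intro u hu
      simp only [Finset.mem_filter] at hu
      exact pow_dvd_pow a (hmono u t hu.2.le)
  exact ⟨hdvd, fun hpos => Int.le_of_dvd hpos hdvd⟩
end

section
/- Let c > 0 and let an assignment place items into knapsacks of equal capacity c such that (a) the total weight of all assigned items is at most m·c (m the number of knapsacks), (b) the number of items with weight > c/2 is at most m, and (c) each item of weight > c/2 is alone in its knapsack or is the first (heaviest) item in its knapsack. If items are assigned greedily in non-increasing weight order to the knapsack with maximum free capacity, then every item of weight > c/2 is placed in an empty knapsack. -/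
/-- Equal-capacity greedy packing: with items in non-increasing weight order, total weight
at most `m·c`, at most `m` items heavier than `c/2`, each heavy item alone or first in its
knapsack, and the greedy rule assigning each item to a currently least-loaded knapsack,
every item of weight `> c/2` is placed in an empty knapsack. -/
theorem heavy_items_to_empty_knapsacks {M : Type*} [Fintype M] [DecidableEq M] (n : ℕ)
    (c : ℝ) (hc : 0 < c)
    (w : Fin n → ℝ) (hw : ∀ j, 0 < w j)
    (hsorted : ∀ t u : Fin n, t ≤ u → w u ≤ w t)
    (A : Fin n → M)
    (load : ℕ → M → ℝ)
    (hload : ∀ t i, load t i =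
      ∑ j ∈ Finset.univ.filter (fun j : Fin n => (j : ℕ) < t ∧ A j = i), w j)
    (htot : ∑ j, w j ≤ (Fintype.card M : ℝ) * c)
    (hheavycount : (Finset.univ.filter (fun j : Fin n => c / 2 < w j)).card ≤ Fintype.card M)
    (hheavy : ∀ t : Fin n, c / 2 < w t →
      ((∀ u : Fin n, u ≠ t → A u ≠ A t) ∨ (∀ u : Fin n, (u : ℕ) < (t : ℕ) → A u ≠ A t)))
    (hgreedy : ∀ t : Fin n, ∀ i, load t (A t) ≤ load t i) :
    ∀ t : Fin n, c / 2 < w t → load t (A t) = 0 := by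
  intro t ht
  -- all items up to t are heavy, so t + 1 ≤ card M
  have hsub : Finset.Iic t ⊆ Finset.univ.filter (fun j : Fin n => c / 2 < w j) := by
    intro u hu
    simp only [Finset.mem_filter, Finset.mem_univ, true_and]
    exact lt_of_lt_of_le ht (hsorted u t (Finset.mem_Iic.mp hu))
  have h1 : (t : ℕ) + 1 ≤ Fintype.card M := by
    have := Finset.card_le_card hsub
    rw [Fin.card_Iic] at this
    exact le_trans this hheavycount
  -- there is a knapsack not used by any item before t
  have himg : (Finset.image A (Finset.univ.filter (fun j : Fin n => (j : ℕ) < (t : ℕ)))).card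
      < Fintype.card M := by
    calc (Finset.image A (Finset.univ.filter (fun j : Fin n => (j : ℕ) < (t : ℕ)))).card
        ≤ (Finset.univ.filter (fun j : Fin n => (j : ℕ) < (t : ℕ))).card :=
          Finset.card_image_le
      _ = (Finset.Iio t).card := by
          congr 1; ext u
          simp only [Finset.mem_filter, Finset.mem_univ, true_and, Finset.mem_Iio, Fin.lt_def]
      _ = (t : ℕ) := Fin.card_Iio t
      _ < Fintype.card M := by omega
  obtain ⟨i, hi⟩ : ∃ i : M,
      i ∉ Finset.image A (Finset.univ.filter (fun j : Fin n => (j : ℕ) < (t : ℕ))) := by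
    by_contra h
    push_neg at h
    have : (Finset.univ : Finset M) ⊆
        Finset.image A (Finset.univ.filter (fun j : Fin n => (j : ℕ) < (t : ℕ))) :=
      fun x _ => h x
    have := Finset.card_le_card this
    rw [Finset.card_univ] at this
    omega
  -- that knapsack is empty at time t
  have hzero : load t i = 0 := by
    rw [hload]
    apply Finset.sum_eq_zero_iff_of_nonneg (fun j _ => (hw j).le) |>.mpr
    intro j hj
    simp only [Finset.mem_filter, Finset.mem_univ, true_and] at hj
    exact absurd (Finset.mem_image.mpr ⟨j, Finset.mem_filter.mpr ⟨Finset.mem_univ _, hj.1⟩, hj.2⟩) hi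
  have hle := hgreedy t i
  have hnn : 0 ≤ load t (A t) := by
    rw [hload]
    exact Finset.sum_nonneg fun j _ => (hw j).le
  linarith
end

section
/- Let d > 0 and let c_1, …, c_m > 0 be capacities. If d' > 0 satisfies d_h < d' < d_{h+1} for consecutive elements d_h < d_{h+1} of the set D' = (0, w_max) ∩ {c_i/q : i ∈ M, q ∈ ℤ_{>0}}, then ∑_{i∈M} f_{d_h}(c_i) = ∑_{i∈M} f_{d'}(c_i), and for every weight w > 0, f_{d'}(w) ≤ f_{d_h}(w); consequently the counting constraint for d' is implied by the counting constraint for d_h. -/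
/-- Between consecutive breakpoints of `D' = (0, w_max) ∩ {c_i/q}`, the right-hand side
`∑_i f_d(c_i)` is unchanged while `f_d(w)` is non-increasing in `d`; consequently the
counting constraint at `d'` is implied by the one at the breakpoint `d_h` below it. -/
theorem breakpoint_constraints_suffice {M : Type*} [Fintype M] {ι : Type*}
    (c : M → ℝ) (hc : ∀ i, 0 < c i) (wmax : ℝ) (hwmax : 0 < wmax)
    (D' : Set ℝ)
    (hD' : D' = {x : ℝ | 0 < x ∧ x < wmax ∧ ∃ (i : M) (q : ℕ), 0 < q ∧ x = c i / q})
    (dh d' dh1 : ℝ)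
    (hdh : dh ∈ D') (hdh1 : dh1 ∈ D')
    (hconsec : ∀ x ∈ D', ¬(dh < x ∧ x < dh1))
    (hbetween : dh < d' ∧ d' < dh1) :
    (∑ i, fd dh (c i) = ∑ i, fd d' (c i)) ∧
    (∀ w : ℝ, 0 < w → fd d' w ≤ fd dh w) ∧
    (∀ (S : Finset ι) (w : ι → ℝ), (∀ j ∈ S, 0 < w j) →
      ∑ j ∈ S, fd dh (w j) ≤ ∑ i, fd dh (c i) →
      ∑ j ∈ S, fd d' (w j) ≤ ∑ i, fd d' (c i)) := by
  obtain ⟨hd1, hd2⟩ := hbetween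
  have hdh_pos : 0 < dh := by rw [hD'] at hdh; exact hdh.1
  have hdh1_lt : dh1 < wmax := by rw [hD'] at hdh1; exact hdh1.2.1
  have hd'_pos : 0 < d' := hdh_pos.trans hd1
  have mono : ∀ w : ℝ, 0 < w → fd d' w ≤ fd dh w := by
    intro w hw
    unfold fd
    have h : w / d' ≤ w / dh :=
      div_le_div_of_nonneg_left hw.le hdh_pos hd1.le
    have := Int.ceil_le_ceil h
    omega
  have key : ∀ i, fd dh (c i) = fd d' (c i) := by
    intro i
    unfold fd
    have hle : ⌈c i / d'⌉ ≤ ⌈c i / dh⌉ :=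
      Int.ceil_le_ceil (div_le_div_of_nonneg_left (hc i).le hdh_pos hd1.le)
    rcases eq_or_lt_of_le hle with h | hlt
    · omega
    · exfalso
      set k : ℤ := ⌈c i / d'⌉ with hk
      have hkpos : 0 < k := Int.ceil_pos.mpr (div_pos (hc i) hd'_pos)
      have hkR : (0 : ℝ) < (k : ℝ) := by exact_mod_cast hkpos
      have h1 : c i / d' ≤ (k : ℝ) := Int.le_ceil _
      have h2 : (k : ℝ) < c i / dh := Int.lt_ceil.mp hlt
      set x : ℝ := c i / (k : ℝ) with hx
      have hx_le : x ≤ d' := by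
        rw [hx, div_le_iff₀ hkR]
        have := (div_le_iff₀ hd'_pos).mp h1
        linarith
      have hx_gt : dh < x := by
        rw [hx, lt_div_iff₀ hkR]
        have := (lt_div_iff₀ hdh_pos).mp h2
        linarith
      have hxD : x ∈ D' := by
        rw [hD']
        refine ⟨hdh_pos.trans hx_gt, ?_, i, k.toNat, ?_, ?_⟩
        · exact lt_of_le_of_lt hx_le (hd2.trans hdh1_lt)
        · omega
        · rw [hx]
          congr 1
          exact_mod_cast (Int.toNat_of_nonneg hkpos.le).symm
      exact hconsec x hxD ⟨hx_gt, lt_of_le_of_lt hx_le hd2⟩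
  have hsum : ∑ i, fd dh (c i) = ∑ i, fd d' (c i) :=
    Finset.sum_congr rfl fun i _ => key i
  refine ⟨hsum, mono, fun S w hw hle => ?_⟩
  calc ∑ j ∈ S, fd d' (w j) ≤ ∑ j ∈ S, fd dh (w j) :=
        Finset.sum_le_sum fun j hj => mono (w j) (hw j hj)
    _ ≤ ∑ i, fd dh (c i) := hle
    _ = ∑ i, fd d' (c i) := hsum
end

section
/- Let m ≥ 3 knapsacks each have capacity 1, and consider 2m+1 items each of weight m/(2m+1). Then (a) the total item weight (2m+1)·m/(2m+1) = m equals the total capacity, (b) each item weight satisfies m/(2m+1) < 1/2, so ∑_j f_{1/2}(w_j) = 0 ≤ ∑_i f_{1/2}(1) = m, yet (c) any assignment of all 2m+1 items to the m knapsacks places at least three items in some knapsack, exceeding its capacity by at least 3m/(2m+1) − 1 = 1/2 − 3/(4m+2). -/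
/-- Tight `β ≤ 1/2` example: `m ≥ 3` unit-capacity knapsacks and `2m+1` items of weight
`m/(2m+1)`. The total weight equals total capacity and the `d = 1/2` counting constraint
is satisfied, yet any assignment of all items puts at least three items in some knapsack,
exceeding its capacity by `3m/(2m+1) − 1 = 1/2 − 3/(4m+2)`. -/
theorem tight_half_example (m : ℕ) (hm : 3 ≤ m) :
    ((2 * m + 1 : ℝ)) * ((m : ℝ) / (2 * m + 1)) = (m : ℝ) ∧
    (m : ℝ) / (2 * m + 1) < 1 / 2 ∧
    fd (1 / 2) ((m : ℝ) / (2 * m + 1)) = 0 ∧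
    fd (1 / 2) 1 = 1 ∧
    ∀ A : Fin (2 * m + 1) → Fin m, ∃ i : Fin m,
      3 ≤ (Finset.univ.filter (fun j => A j = i)).card ∧
      3 * (m : ℝ) / (2 * m + 1) - 1 ≤
        (∑ _j ∈ Finset.univ.filter (fun j => A j = i), (m : ℝ) / (2 * m + 1)) - 1 ∧
      3 * (m : ℝ) / (2 * m + 1) - 1 = 1 / 2 - 3 / (4 * (m : ℝ) + 2) := by
  have hm0 : (0 : ℝ) < m := by positivity
  have hpos : (0 : ℝ) < 2 * m + 1 := by positivity
  refine ⟨by field_simp, ?_, ?_, ?_, ?_⟩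
  · rw [div_lt_div_iff₀ hpos (by norm_num)]; linarith
  · unfold fd
    have h1 : (m : ℝ) / (2 * m + 1) / (1 / 2) = 2 * m / (2 * m + 1) := by
      field_simp
    rw [h1]
    have h2 : ⌈(2 * (m : ℝ)) / (2 * m + 1)⌉ = 1 := by
      rw [Int.ceil_eq_iff]
      constructor
      · push_cast
        rw [lt_div_iff₀ hpos]; norm_num; positivity
      · rw [div_le_iff₀ hpos]; push_cast; linarith
    rw [h2]; ring
  · unfold fd; norm_num
  · intro A
    obtain ⟨i, -, hi⟩ := Finset.exists_lt_card_fiber_of_mul_lt_card_of_maps_to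
      (s := Finset.univ) (t := Finset.univ) (f := A) (n := 2)
      (fun a _ => Finset.mem_univ (A a)) (by simp; omega)
    refine ⟨i, hi, ?_, ?_⟩
    · rw [Finset.sum_const, nsmul_eq_mul]
      have : (3 : ℝ) ≤ ((Finset.univ.filter fun j => A j = i).card : ℝ) := by
        exact_mod_cast hi
      have hw : (0 : ℝ) < (m : ℝ) / (2 * m + 1) := by positivity
      have := mul_le_mul_of_nonneg_right this hw.le
      rw [mul_div_assoc]; linarith
    · field_simp; ring
end

section
/- Let m ≥ 3 and consider m knapsacks of capacity 1 and a single group with m+1 items of weight m/(m+1) each. Then the total group weight is m = total capacity, so the aggregated knapsack constraint is satisfied with equality, but any assignment of all m+1 items to the m knapsacks places two items in some knapsack, exceeding its capacity by 2m/(m+1) − 1 = 1 − 2/(m+1). -/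
/-- Tight `β ≤ 1` example: `m ≥ 3` unit-capacity knapsacks and one group of `m+1` items
of weight `m/(m+1)`. The total group weight equals total capacity, but any assignment of
all items places two items in some knapsack, exceeding its capacity by
`2m/(m+1) − 1 = 1 − 2/(m+1)`. -/
theorem tight_one_example (m : ℕ) (hm : 3 ≤ m) :
    ((m + 1 : ℝ)) * ((m : ℝ) / (m + 1)) = (m : ℝ) ∧
    ∀ A : Fin (m + 1) → Fin m, ∃ i : Fin m,
      2 ≤ (Finset.univ.filter (fun j => A j = i)).card ∧
      2 * (m : ℝ) / (m + 1) - 1 ≤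
        (∑ _j ∈ Finset.univ.filter (fun j => A j = i), (m : ℝ) / (m + 1)) - 1 ∧
      2 * (m : ℝ) / (m + 1) - 1 = 1 - 2 / ((m : ℝ) + 1) := by
  have hm1 : (0 : ℝ) < (m : ℝ) + 1 := by positivity
  constructor
  · field_simp
  · intro A
    obtain ⟨i, hi⟩ := Fintype.exists_lt_card_fiber_of_mul_lt_card (f := A) (n := 1)
      (by simp)
    refine ⟨i, hi, ?_, ?_⟩
    · rw [Finset.sum_const, nsmul_eq_mul]
      have h2 : (2 : ℝ) ≤ ((Finset.univ.filter (fun j => A j = i)).card : ℝ) := by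
        exact_mod_cast hi
      have hw : (0 : ℝ) ≤ (m : ℝ) / (m + 1) := by positivity
      have := mul_le_mul_of_nonneg_right h2 hw
      rw [mul_div_assoc]; linarith
    · field_simp
      ring
end
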